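/- For θ, θ̃ ∈ (0, π), the matrix S = [[1, (cos θ̃ - cos θ)/sin θ], [0, sin θ̃/sin θ]] satisfies: the eigenvalues of SSᵀ are exactly (cos θ̃ - 1)/(cos θ - 1) and (cos θ̃ + 1)/(cos θ + 1). -/

import Mathlib

open Real Matrix

/-- For `θ, θ̃ ∈ (0, π)` and
`S = [[1, (cos θ̃ - cos θ)/sin θ], [0, sin θ̃/sin θ]]`, the eigenvalues of `S * Sᵀ`
are exactly `(cos θ̃ - 1)/(cos θ - 1)` and `(cos θ̃ + 1)/(cos θ + 1)`. -/
theorem eigenvalues_SST (θ θ' : ℝ) (hθ : θ ∈ Set.Ioo 0 π) (hθ' : θ' ∈ Set.Ioo 0 π) :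
    let S : Matrix (Fin 2) (Fin 2) ℝ :=
      !![1, (Real.cos θ' - Real.cos θ) / Real.sin θ; 0, Real.sin θ' / Real.sin θ]
    ∀ μ : ℝ, Module.End.HasEigenvalue (Matrix.toEuclideanLin (S * Sᵀ)) μ ↔
      μ = (Real.cos θ' - 1) / (Real.cos θ - 1) ∨
      μ = (Real.cos θ' + 1) / (Real.cos θ + 1) := by
  intro S μ
  have hsθ : Real.sin θ > 0 := Real.sin_pos_of_pos_of_lt_pi hθ.1 hθ.2
  have hs : Real.sin θ ≠ 0 := ne_of_gt hsθ
  have hlt1 : Real.cos θ < 1 := by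
    have := Real.cos_lt_cos_of_nonneg_of_le_pi le_rfl (le_of_lt hθ.2) hθ.1
    simpa using this
  have hgt1 : -1 < Real.cos θ := by
    have := Real.cos_lt_cos_of_nonneg_of_le_pi (le_of_lt hθ.1) le_rfl hθ.2
    simpa [Real.cos_pi] using this
  have hc1 : Real.cos θ - 1 ≠ 0 := by linarith
  have hc2 : Real.cos θ + 1 ≠ 0 := by linarith
  have pyth : Real.sin θ ^ 2 = 1 - Real.cos θ ^ 2 := by
    nlinarith [Real.sin_sq_add_cos_sq θ]
  have pyth' : Real.sin θ' ^ 2 = 1 - Real.cos θ' ^ 2 := by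
    nlinarith [Real.sin_sq_add_cos_sq θ']
  set c : ℝ := (Real.cos θ' - Real.cos θ) / Real.sin θ with hcdef
  set s : ℝ := Real.sin θ' / Real.sin θ with hsdef
  set a : ℝ := (Real.cos θ' - 1) / (Real.cos θ - 1) with hadef
  set b : ℝ := (Real.cos θ' + 1) / (Real.cos θ + 1) with hbdef
  -- compute the matrix product
  have hM : S * Sᵀ = !![1 + c * c, c * s; s * c, s * s] := by
    have hS : S = !![1, c; 0, s] := rfl
    have hT : (!![1, c; 0, s] : Matrix (Fin 2) (Fin 2) ℝ)ᵀ = !![1, 0; c, s] := by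
      ext i j; fin_cases i <;> fin_cases j <;> rfl
    rw [hS, hT, Matrix.mul_fin_two]
    norm_num [mul_comm]
  -- key algebraic identities
  have hab : a * b = s * s := by
    rw [hadef, hbdef, hsdef]
    field_simp
    nlinarith [pyth, pyth']
  have hsum : a + b = 1 + c * c + s * s := by
    rw [hadef, hbdef, hsdef, hcdef]
    field_simp
    nlinarith [pyth, pyth']
  rw [Module.End.hasEigenvalue_iff_mem_spectrum, Matrix.spectrum_toEuclideanLin,
    spectrum.mem_iff]
  rw [hM]
  have halg : (algebraMap ℝ (Matrix (Fin 2) (Fin 2) ℝ)) μ - !![1 + c * c, c * s; s * c, s * s]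
      = !![μ - (1 + c * c), -(c * s); -(s * c), μ - s * s] := by
    ext i j
    fin_cases i <;> fin_cases j <;>
      simp [Matrix.algebraMap_matrix_apply]
  rw [halg, Matrix.isUnit_iff_isUnit_det, isUnit_iff_ne_zero, not_not,
    Matrix.det_fin_two_of]
  have key : (μ - (1 + c * c)) * (μ - s * s) - -(c * s) * -(s * c)
      = (μ - a) * (μ - b) := by
    linear_combination μ * hsum - hab
  rw [key, mul_eq_zero, sub_eq_zero, sub_eq_zero]
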